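/- The Maslov index of a product satisfies μ(S_∞ S'_∞) = μ(S_∞) + μ(S'_∞) - Inert(SS'ℓ_p, Sℓ_p, ℓ_p) for all S_∞, S'_∞ in the universal cover of Sp(n); in particular μ(I_∞) = 0. -/
import Mathlib


open Matrix Complex

noncomputable section

/-- Phase space ℝ^{2n} = ℝ^n_x × ℝ^n_p. -/
abbrev V (n : ℕ) := (Fin n → ℝ) × (Fin n → ℝ)

/-- Standard symplectic form σ(z,z') = p·x' - p'·x. -/
def Omega (n : ℕ) (z w : V n) : ℝ := z.2 ⬝ᵥ w.1 - w.2 ⬝ᵥ z.1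

/-- Lagrangian plane: n-dimensional subspace on which σ vanishes. -/
def IsLagrangian (n : ℕ) (L : Submodule ℝ (V n)) : Prop :=
  Module.finrank ℝ L = n ∧ ∀ z ∈ L, ∀ w ∈ L, Omega n z w = 0

/-- Symplectic linear map. -/
def IsSymplectic (n : ℕ) (S : V n →ₗ[ℝ] V n) : Prop :=
  Function.Bijective S ∧ ∀ z w, Omega n (S z) (S w) = Omega n z w

/-- Dimension of a maximal subspace on which Q is positive. -/
def posIndex {E : Type*} [AddCommGroup E] [Module ℝ E] (Q : E → ℝ) : ℕ :=
  sSup {k | ∃ W : Submodule ℝ E, Module.finrank ℝ W = k ∧ ∀ v ∈ W, v ≠ 0 → 0 < Q v}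

def negIndex {E : Type*} [AddCommGroup E] [Module ℝ E] (Q : E → ℝ) : ℕ :=
  posIndex fun v => -Q v

/-- σ(z,z') + σ(z',z'') + σ(z'',z) on ℓ × ℓ' × ℓ''. -/
def tripleForm (n : ℕ) (L L' L'' : Submodule ℝ (V n)) : (L × L' × L'') → ℝ :=
  fun t => Omega n t.1 t.2.1 + Omega n t.2.1 t.2.2 + Omega n t.2.2 t.1

/-- Kashiwara signature τ(ℓ,ℓ',ℓ''). -/
def tau (n : ℕ) (L L' L'' : Submodule ℝ (V n)) : ℤ :=
  (posIndex (tripleForm n L L' L'') : ℤ) - negIndex (tripleForm n L L' L'')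

/-- ∂dim(ℓ,ℓ',ℓ''). -/
def ddim (n : ℕ) (L L' L'' : Submodule ℝ (V n)) : ℤ :=
  (Module.finrank ℝ ↥(L ⊓ L') : ℤ) - Module.finrank ℝ ↥(L ⊓ L'')
    + Module.finrank ℝ ↥(L' ⊓ L'')

/-- Index of inertia. -/
def Inert (n : ℕ) (L L' L'' : Submodule ℝ (V n)) : ℤ :=
  (tau n L L' L'' - ddim n L L' L'' + n) / 2

/-- Real and imaginary parts of a complex matrix. -/
def reM (n : ℕ) (u : Matrix (Fin n) (Fin n) ℂ) : Matrix (Fin n) (Fin n) ℝ :=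
  of fun i j => (u i j).re

def imM (n : ℕ) (u : Matrix (Fin n) (Fin n) ℂ) : Matrix (Fin n) (Fin n) ℝ :=
  of fun i j => (u i j).im

/-- The identification A+iB ↦ [[A,-B],[B,A]] acting on ℝ^{2n}. -/
def uReal (n : ℕ) (u : Matrix (Fin n) (Fin n) ℂ) : V n →ₗ[ℝ] V n where
  toFun z := (reM n u *ᵥ z.1 - imM n u *ᵥ z.2, imM n u *ᵥ z.1 + reM n u *ᵥ z.2)
  map_add' a b := by
    ext i <;> (simp [Matrix.mulVec_add]; try ring)
  map_smul' c a := by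
    ext i <;> (simp [Matrix.mulVec_smul]; try ring)

/-- The momentum plane ℓ_p = 0 × ℝ^n. -/
def ellP (n : ℕ) : Submodule ℝ (V n) := Submodule.prod ⊥ ⊤



lemma posIndex_of_zero {E : Type*} [AddCommGroup E] [Module ℝ E] (Q : E → ℝ)
    (hQ : ∀ v, Q v = 0) : posIndex Q = 0 := by
  have hset : {k : ℕ | ∃ W : Submodule ℝ E, Module.finrank ℝ W = k ∧
      ∀ v ∈ W, v ≠ 0 → 0 < Q v} = {0} := by
    ext k
    constructor
    · rintro ⟨W, hW, h⟩
      have hWbot : W = ⊥ := by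
        rw [Submodule.eq_bot_iff]
        intro v hv
        by_contra hne
        have := h v hv hne
        rw [hQ v] at this
        exact lt_irrefl 0 this
      subst hWbot
      simp [← hW]
    · rintro rfl
      exact ⟨⊥, by simp, fun v hv hne => absurd (Submodule.mem_bot ℝ |>.mp hv) hne⟩
  rw [posIndex, hset, csSup_singleton]

lemma inert_self (n : ℕ) (L : Submodule ℝ (V n)) (hL : IsLagrangian n L) :
    Inert n L L L = 0 := by
  have hzero : ∀ t : (L × L × L), tripleForm n L L L t = 0 := by
    rintro ⟨a, b, c⟩
    simp only [tripleForm]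
    rw [hL.2 a a.2 b b.2, hL.2 b b.2 c c.2, hL.2 c c.2 a a.2]
    ring
  have htau : tau n L L L = 0 := by
    rw [tau, posIndex_of_zero _ hzero, negIndex, posIndex_of_zero _ (by
      intro v; rw [hzero v]; ring)]
    ring
  have hdd : ddim n L L L = (n : ℤ) := by
    rw [ddim]
    have : L ⊓ L = L := inf_idem L
    rw [this, hL.1]
    ring
  rw [Inert, htau, hdd]
  simp

/-- product formula for the Maslov index
μ(S_∞S'_∞) = μ(S_∞) + μ(S'_∞) - Inert(SS'ℓ_p, Sℓ_p, ℓ_p), and μ(I_∞) = 0.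
The universal cover Sp_∞(n) is modelled as a group G acting on the universal cover Λ_∞(n)
of the Lagrangian Grassmannian, covering (via ρ) the action of Sp(n) on Λ(n);
the Leray index m is invariant under this action and satisfies the cocycle property. -/
theorem maslov_product_formula (n : ℕ) (Lam : Type*) (G : Type*) [Group G] [MulAction G Lam]
    (pr : Lam → Submodule ℝ (V n)) (hLag : ∀ a, IsLagrangian n (pr a))
    (ρ : G →* (V n ≃ₗ[ℝ] V n)) (hρ : ∀ g, IsSymplectic n (ρ g).toLinearMap)
    (hequiv : ∀ (g : G) (a : Lam), pr (g • a) = (pr a).map (ρ g).toLinearMap)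
    (m : Lam → Lam → ℤ)
    (hcoc : ∀ a b c, m a b - m a c + m b c = Inert n (pr a) (pr b) (pr c))
    (hinv : ∀ (g : G) (a b : Lam), m (g • a) (g • b) = m a b)
    (ℓ0 : Lam) (hℓ0 : pr ℓ0 = ellP n)
    (μ : G → ℤ) (hμ : ∀ g, μ g = m (g • ℓ0) ℓ0) :
    (∀ g g' : G, μ (g * g') = μ g + μ g'
        - Inert n ((ellP n).map (ρ (g * g')).toLinearMap)
                  ((ellP n).map (ρ g).toLinearMap) (ellP n)) ∧
    μ 1 = 0 := by
  constructor
  · intro g g'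
    have h := hcoc ((g * g') • ℓ0) (g • ℓ0) ℓ0
    have h1 : m ((g * g') • ℓ0) (g • ℓ0) = μ g' := by
      rw [mul_smul, hinv g (g' • ℓ0) ℓ0, hμ]
    have h2 : pr ((g * g') • ℓ0) = (ellP n).map (ρ (g * g')).toLinearMap := by
      rw [hequiv, hℓ0]
    have h3 : pr (g • ℓ0) = (ellP n).map (ρ g).toLinearMap := by
      rw [hequiv, hℓ0]
    rw [h1, h2, h3, hℓ0, ← hμ (g * g'), ← hμ g] at h
    omega
  · have h := hcoc ℓ0 ℓ0 ℓ0
    rw [hℓ0] at h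
    have hL : IsLagrangian n (ellP n) := by rw [← hℓ0]; exact hLag ℓ0
    rw [inert_self n _ hL] at h
    rw [hμ, one_smul]
    omega
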